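/- Let X be a finite-dimensional real Hilbert space with inner product ⟨·,·⟩ and norm |·|. Suppose β : X → X is a continuous function which is strictly monotone, i.e. ⟨β(ξ) − β(ξ̄), ξ − ξ̄⟩ > 0 for every ξ, ξ̄ ∈ X with ξ ≠ ξ̄. Let {ξₙ} ⊂ X be a sequence and ξ ∈ X be such that ⟨β(ξₙ) − β(ξ), ξₙ − ξ⟩ → 0 as n → +∞. Then ξₙ converges to ξ in X. -/

import Mathlib

open scoped RealInnerProductSpace

/-- Monotone operator convergence lemma (Proposition 2.1): if `β : X → X` is
continuous and strictly monotone on a finite-dimensional real Hilbert space `X`,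
and `⟨β(ξₙ) − β(ξ), ξₙ − ξ⟩ → 0`, then `ξₙ → ξ`. -/
theorem tendsto_of_strictly_monotone
    {X : Type*} [NormedAddCommGroup X] [InnerProductSpace ℝ X]
    [FiniteDimensional ℝ X]
    (β : X → X) (hβc : Continuous β)
    (hmono : ∀ ξ ζ : X, ξ ≠ ζ → 0 < ⟪β ξ - β ζ, ξ - ζ⟫)
    (ξ : ℕ → X) (ξ₀ : X)
    (hconv : Filter.Tendsto (fun n => ⟪β (ξ n) - β ξ₀, ξ n - ξ₀⟫)
      Filter.atTop (nhds 0)) :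
    Filter.Tendsto ξ Filter.atTop (nhds ξ₀) := by
  rcases subsingleton_or_nontrivial X with hX | hX
  · have hξ : ξ = fun _ => ξ₀ := funext fun n => Subsingleton.elim _ _
    rw [hξ]
    exact tendsto_const_nhds
  rw [Metric.tendsto_atTop]
  intro ε hε
  set f : X → ℝ := fun u => ⟪β (ξ₀ + u) - β ξ₀, u⟫ with hf
  have hfc : Continuous f :=
    Continuous.inner ((hβc.comp (continuous_const.add continuous_id)).sub
      continuous_const) continuous_id
  have hsne : (Metric.sphere (0 : X) ε).Nonempty :=
    NormedSpace.sphere_nonempty.mpr hε.le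
  obtain ⟨u₀, hu₀mem, hu₀min⟩ :=
    (isCompact_sphere (0 : X) ε).exists_isMinOn hsne hfc.continuousOn
  set c : ℝ := f u₀ with hc
  have hu₀norm : ‖u₀‖ = ε := by simpa using hu₀mem
  have hcpos : 0 < c := by
    have hne : ξ₀ + u₀ ≠ ξ₀ := by
      intro h
      have : u₀ = 0 := by
        have := congrArg (· - ξ₀) h
        simpa using this
      rw [this] at hu₀norm
      simp at hu₀norm
      exact hε.ne hu₀norm
    have := hmono (ξ₀ + u₀) ξ₀ hne
    simpa [hc, hf] using this
  -- key: for all h with ε ≤ ‖h‖, c ≤ f h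
  have key : ∀ h : X, ε ≤ ‖h‖ → c ≤ f h := by
    intro h hh
    set t : ℝ := ‖h‖ / ε with ht
    have htpos : 0 < t := div_pos (hε.trans_le hh) hε
    have ht1 : 1 ≤ t := (one_le_div hε).mpr hh
    set u : X := t⁻¹ • h with hu
    have hhu : h = t • u := by
      rw [hu, smul_smul, mul_inv_cancel₀ htpos.ne', one_smul]
    have hunorm : ‖u‖ = ε := by
      rw [hu, norm_smul, norm_inv, Real.norm_of_nonneg htpos.le, ht]
      field_simp
      exact (div_self (hε.trans_le hh).ne')
    have hune : u ≠ 0 := by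
      intro h0
      rw [h0, norm_zero] at hunorm
      exact hε.ne hunorm
    have humem : u ∈ Metric.sphere (0 : X) ε := by simp [hunorm]
    have hfu : c ≤ f u := hu₀min humem
    -- first term nonneg
    have hA : 0 ≤ ⟪β (ξ₀ + t • u) - β (ξ₀ + u), u⟫ := by
      rcases eq_or_lt_of_le ht1 with h1 | h1
      · simp [← h1]
      · have hne2 : ξ₀ + t • u ≠ ξ₀ + u := by
          intro heq
          have : t • u = u := by
            have := congrArg (· - ξ₀) heq
            simpa [add_sub_cancel_left] using this
          have : (t - 1) • u = 0 := by
            rw [sub_smul, one_smul, this, sub_self]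
          rcases smul_eq_zero.mp this with h' | h'
          · exact sub_ne_zero.mpr h1.ne' h'
          · exact hune h'
        have hm := hmono (ξ₀ + t • u) (ξ₀ + u) hne2
        have heq : (ξ₀ + t • u) - (ξ₀ + u) = (t - 1) • u := by
          rw [sub_smul, one_smul]; abel
        rw [heq, real_inner_smul_right] at hm
        nlinarith
    have hexp : f h = t * (⟪β (ξ₀ + t • u) - β (ξ₀ + u), u⟫ + f u) := by
      rw [hf]
      simp only
      rw [hhu, real_inner_smul_right]
      congr 1
      rw [← inner_add_left]
      congr 1
      abel
    rw [hexp]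
    nlinarith
  rw [Metric.tendsto_atTop] at hconv
  obtain ⟨N, hN⟩ := hconv c hcpos
  refine ⟨N, fun n hn => ?_⟩
  by_contra hcon
  push_neg at hcon
  rw [dist_eq_norm] at hcon
  have h1 := key (ξ n - ξ₀) hcon
  have h2 : f (ξ n - ξ₀) = ⟪β (ξ n) - β ξ₀, ξ n - ξ₀⟫ := by
    simp [hf]
  have h3 := hN n hn
  rw [Real.dist_eq, sub_zero] at h3
  have := abs_lt.mp h3
  linarith [h1, h2.symm ▸ h1, this.2, h2 ▸ h1]
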